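/- With the deformation $q^{\epsilon_2}_j(t) = q_j(t) - t(2\epsilon_2 - t)e_1$, $q^{\epsilon_2}_k(t) = q_k(t) + t(2\epsilon_2-t)e_1$ for $t \in [0,\epsilon_2]$ (constant shifts $\mp\epsilon_2^2 e_1$ on $[\epsilon_2,T]$), and assuming $|\dot x_j(t)|, |\dot x_k(t)| \le C_1 t^{2/3}$ as $t \to 0^+$, the kinetic-energy increment satisfies $\int_0^T K(\dot q^{\epsilon_2}) - K(\dot q)\,dt \le C_2\,\epsilon_2^{8/3}$ for some constant $C_2$ depending only on $m_j + m_k$ and $C_1$, for all sufficiently small $\epsilon_2 > 0$. -/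

import Mathlib

open MeasureTheory Set RealInnerProductSpace

lemma stmt10_sub_sq (v : EuclideanSpace ℝ (Fin 3)) (c : ℝ) :
    ‖v - c • (EuclideanSpace.single 0 1 : EuclideanSpace ℝ (Fin 3))‖ ^ 2 - ‖v‖ ^ 2
      = c ^ 2 - 2 * c * v 0 := by
  have h1 : (inner ℝ v (c • (EuclideanSpace.single 0 1 : EuclideanSpace ℝ (Fin 3))) : ℝ)
      = c * v 0 := by
    rw [real_inner_smul_right, EuclideanSpace.inner_single_right]
    simp
  have h2 : ‖c • (EuclideanSpace.single 0 1 : EuclideanSpace ℝ (Fin 3))‖ ^ 2 = c ^ 2 := by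
    rw [norm_smul, EuclideanSpace.norm_single]
    simp [mul_pow, sq_abs]
  rw [norm_sub_sq_real, h1, h2]; ring

lemma stmt10_add_sq (v : EuclideanSpace ℝ (Fin 3)) (c : ℝ) :
    ‖v + c • (EuclideanSpace.single 0 1 : EuclideanSpace ℝ (Fin 3))‖ ^ 2 - ‖v‖ ^ 2
      = c ^ 2 + 2 * c * v 0 := by
  have h1 : (inner ℝ v (c • (EuclideanSpace.single 0 1 : EuclideanSpace ℝ (Fin 3))) : ℝ)
      = c * v 0 := by
    rw [real_inner_smul_right, EuclideanSpace.inner_single_right]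
    simp
  have h2 : ‖c • (EuclideanSpace.single 0 1 : EuclideanSpace ℝ (Fin 3))‖ ^ 2 = c ^ 2 := by
    rw [norm_smul, EuclideanSpace.norm_single]
    simp [mul_pow, sq_abs]
  rw [norm_add_sq_real, h1, h2]; ring

/-- Kinetic-energy increment of the deformation in Lemma 2.7: deforming the colliding
bodies by `∓ t(2ε₂ - t)e₁` on `[0,ε₂]` increases the kinetic part of the action by at
most `C₂ ε₂^{8/3}`, given the Sundman bound `|ẋⱼ|, |ẋₖ| ≤ C₁ t^{2/3}` near `t = 0⁺`. -/
theorem stmt10 (T mj mk C1 t1 : ℝ) (hT : 0 < T) (hmj : 0 < mj) (hmk : 0 < mk)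
    (hC1 : 0 < C1) (ht1 : 0 < t1)
    (dqj dqk : ℝ → EuclideanSpace ℝ (Fin 3))
    (hmeasj : Measurable dqj) (hmeask : Measurable dqk)
    (hbdj : ∀ t ∈ Ioc (0:ℝ) t1, |dqj t 0| ≤ C1 * t ^ ((2:ℝ)/3))
    (hbdk : ∀ t ∈ Ioc (0:ℝ) t1, |dqk t 0| ≤ C1 * t ^ ((2:ℝ)/3)) :
    ∃ C2 > 0, ∃ ε0 > 0, ∀ ε ∈ Ioo (0:ℝ) ε0,
      (∫ t in (0:ℝ)..ε,
        ((1/2) * mj * (‖dqj t - (2 * (ε - t)) •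
            (EuclideanSpace.single 0 1 : EuclideanSpace ℝ (Fin 3))‖ ^ 2 - ‖dqj t‖ ^ 2)
        + (1/2) * mk * (‖dqk t + (2 * (ε - t)) •
            (EuclideanSpace.single 0 1 : EuclideanSpace ℝ (Fin 3))‖ ^ 2 - ‖dqk t‖ ^ 2)))
      ≤ C2 * ε ^ ((8:ℝ)/3) := by
  refine ⟨2 * (mj + mk) * (1 + C1), by positivity, min t1 1, by positivity, ?_⟩
  intro ε hε
  obtain ⟨hε0, hεlt⟩ := hε
  have hεt1 : ε ≤ t1 := le_trans hεlt.le (min_le_left _ _)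
  have hε1 : ε ≤ 1 := le_trans hεlt.le (min_le_right _ _)
  set B : ℝ := C1 * ε ^ ((2:ℝ)/3) with hBdef
  have hB : 0 ≤ B := by positivity
  set M : ℝ := (mj + mk) * (2 * ε ^ 2 + 2 * ε * B) with hMdef
  have hbound : ∀ t ∈ Set.uIoc (0:ℝ) ε,
      ‖(1/2) * mj * (‖dqj t - (2 * (ε - t)) •
            (EuclideanSpace.single 0 1 : EuclideanSpace ℝ (Fin 3))‖ ^ 2 - ‖dqj t‖ ^ 2)
        + (1/2) * mk * (‖dqk t + (2 * (ε - t)) •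
            (EuclideanSpace.single 0 1 : EuclideanSpace ℝ (Fin 3))‖ ^ 2 - ‖dqk t‖ ^ 2)‖ ≤ M := by
    intro t ht
    rw [Set.uIoc_of_le hε0.le] at ht
    obtain ⟨ht0, htε⟩ := ht
    have hj : |dqj t 0| ≤ B := by
      refine (hbdj t ⟨ht0, htε.trans hεt1⟩).trans ?_
      exact mul_le_mul_of_nonneg_left
        (Real.rpow_le_rpow ht0.le htε (by norm_num)) hC1.le
    have hk : |dqk t 0| ≤ B := by
      refine (hbdk t ⟨ht0, htε.trans hεt1⟩).trans ?_
      exact mul_le_mul_of_nonneg_left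
        (Real.rpow_le_rpow ht0.le htε (by norm_num)) hC1.le
    rw [stmt10_sub_sq, stmt10_add_sq, Real.norm_eq_abs]
    set c : ℝ := 2 * (ε - t) with hcdef
    have hc0 : 0 ≤ c := by simp [hcdef]; linarith
    have hc2 : c ≤ 2 * ε := by simp [hcdef]; linarith
    have hj1 : dqj t 0 ≤ B := le_trans (le_abs_self _) hj
    have hj2 : -B ≤ dqj t 0 := neg_le_of_abs_le hj
    have hk1 : dqk t 0 ≤ B := le_trans (le_abs_self _) hk
    have hk2 : -B ≤ dqk t 0 := neg_le_of_abs_le hk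
    rw [abs_le]
    constructor
    · nlinarith [mul_nonneg (mul_nonneg hmj.le hc0) (sub_nonneg.2 hj1),
        mul_nonneg (mul_nonneg hmk.le hc0) (sub_nonneg.2 hk1),
        mul_nonneg (mul_nonneg hmj.le hc0) (by linarith : (0:ℝ) ≤ dqj t 0 + B),
        mul_nonneg (mul_nonneg hmk.le hc0) (by linarith : (0:ℝ) ≤ dqk t 0 + B),
        mul_nonneg hmj.le (mul_nonneg (by linarith : (0:ℝ) ≤ 2*ε - c) (by linarith : (0:ℝ) ≤ 2*ε + c)),
        mul_nonneg hmk.le (mul_nonneg (by linarith : (0:ℝ) ≤ 2*ε - c) (by linarith : (0:ℝ) ≤ 2*ε + c)),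
        mul_nonneg (mul_nonneg hmj.le hB) (by linarith : (0:ℝ) ≤ 2*ε - c),
        mul_nonneg (mul_nonneg hmk.le hB) (by linarith : (0:ℝ) ≤ 2*ε - c)]
    · nlinarith [mul_nonneg (mul_nonneg hmj.le hc0) (sub_nonneg.2 hj1),
        mul_nonneg (mul_nonneg hmk.le hc0) (sub_nonneg.2 hk1),
        mul_nonneg (mul_nonneg hmj.le hc0) (by linarith : (0:ℝ) ≤ dqj t 0 + B),
        mul_nonneg (mul_nonneg hmk.le hc0) (by linarith : (0:ℝ) ≤ dqk t 0 + B),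
        mul_nonneg hmj.le (mul_nonneg (by linarith : (0:ℝ) ≤ 2*ε - c) (by linarith : (0:ℝ) ≤ 2*ε + c)),
        mul_nonneg hmk.le (mul_nonneg (by linarith : (0:ℝ) ≤ 2*ε - c) (by linarith : (0:ℝ) ≤ 2*ε + c)),
        mul_nonneg (mul_nonneg hmj.le hB) (by linarith : (0:ℝ) ≤ 2*ε - c),
        mul_nonneg (mul_nonneg hmk.le hB) (by linarith : (0:ℝ) ≤ 2*ε - c)]
  have hnorm := intervalIntegral.norm_integral_le_of_norm_le_const hbound
  have hMε : M * |ε - 0| = M * ε := by rw [sub_zero, abs_of_pos hε0]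
  have hstep : (∫ t in (0:ℝ)..ε,
        ((1/2) * mj * (‖dqj t - (2 * (ε - t)) •
            (EuclideanSpace.single 0 1 : EuclideanSpace ℝ (Fin 3))‖ ^ 2 - ‖dqj t‖ ^ 2)
        + (1/2) * mk * (‖dqk t + (2 * (ε - t)) •
            (EuclideanSpace.single 0 1 : EuclideanSpace ℝ (Fin 3))‖ ^ 2 - ‖dqk t‖ ^ 2)))
      ≤ M * ε := by
    calc _ ≤ ‖(∫ t in (0:ℝ)..ε,
        ((1/2) * mj * (‖dqj t - (2 * (ε - t)) •
            (EuclideanSpace.single 0 1 : EuclideanSpace ℝ (Fin 3))‖ ^ 2 - ‖dqj t‖ ^ 2)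
        + (1/2) * mk * (‖dqk t + (2 * (ε - t)) •
            (EuclideanSpace.single 0 1 : EuclideanSpace ℝ (Fin 3))‖ ^ 2 - ‖dqk t‖ ^ 2)))‖ :=
        le_abs_self _
      _ ≤ M * |ε - 0| := hnorm
      _ = M * ε := hMε
  refine hstep.trans ?_
  -- M * ε = (mj+mk)*(2 ε^3 + 2 C1 ε^{8/3}) ≤ 2 (mj+mk)(1+C1) ε^{8/3}
  have h3 : ε ^ (3:ℝ) ≤ ε ^ ((8:ℝ)/3) :=
    Real.rpow_le_rpow_of_exponent_ge hε0 hε1 (by norm_num)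
  have hε3 : ε ^ 2 * ε = ε ^ (3:ℝ) := by
    rw [show (3:ℝ) = ((3:ℕ):ℝ) by norm_num, Real.rpow_natCast]
    try ring
  have hε83 : ε * ε ^ ((2:ℝ)/3) * ε = ε ^ ((8:ℝ)/3) := by
    rw [show (8:ℝ)/3 = 1 + (2:ℝ)/3 + 1 by norm_num, Real.rpow_add hε0, Real.rpow_add hε0,
      Real.rpow_one]
    try ring
  have hMe : M * ε = (mj + mk) * (2 * ε ^ (3:ℝ) + 2 * C1 * ε ^ ((8:ℝ)/3)) := by
    rw [hMdef, hBdef, ← hε3, ← hε83]; ring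
  rw [hMe]
  have h83 : 0 ≤ ε ^ ((8:ℝ)/3) := by positivity
  nlinarith [mul_le_mul_of_nonneg_left h3 (by positivity : (0:ℝ) ≤ 2 * (mj + mk)),
    mul_nonneg (mul_nonneg (by positivity : (0:ℝ) ≤ mj + mk) hC1.le) h83]
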